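/- Individual rationality and seller protection of the Greedy-RP mechanism: for every family of bids B, every winner j ∈ W(B) pays a price p_j with ô(d_j) ≤ p_j ≤ v_j (the payment is at least the bundle reserve price and at most the declared valuation), and every non-winner pays p_j = 0. -/

import Mathlib

open Classical Finset

noncomputable section

/-- A bundle: requested amounts of each of the `k` VM types. -/
abbrev Bundle (k : ℕ) := Fin k → ℕ

/-- A bid: a bundle together with a declared valuation. -/
abbrev Bid (k : ℕ) := Bundle k × ℝ

/-- A bundle is nonzero if some coordinate is positive. -/
def nonzeroBundle {k : ℕ} (d : Bundle k) : Prop := ∃ i, 0 < d i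

/-- A valid bid requests a nonzero bundle and declares a nonnegative valuation. -/
def validBid {k : ℕ} (b : Bid k) : Prop := nonzeroBundle b.1 ∧ 0 ≤ b.2

/-- The weighted bundle size `d̂(d) = Σ_i (d i)·(f i)`. -/
def dhat {k : ℕ} (f : Fin k → ℝ) (d : Bundle k) : ℝ := ∑ i, (d i : ℝ) * f i

/-- The bundle reserve price `ô(d) = Σ_i (d i)·(o i)`. -/
def ohat {k : ℕ} (o : Fin k → ℝ) (d : Bundle k) : ℝ := ∑ i, (d i : ℝ) * o i

/-- The bid density `e(d, v) = v / (d̂ d)^q`. -/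
def density {k : ℕ} (f : Fin k → ℝ) (q : ℝ) (b : Bid k) : ℝ := b.2 / (dhat f b.1) ^ q

/-- The indices of the active set `A`, sorted in non-increasing order of bid density;
`mergeSort` is stable and `A.sort (· ≤ ·)` lists indices increasingly, so ties are
broken by smaller index first. -/
def sortedBids {k n : ℕ} (f : Fin k → ℝ) (q : ℝ) (B : Fin n → Bid k) (A : Finset (Fin n)) :
    List (Fin n) :=
  (A.sort (· ≤ ·)).mergeSort (fun i j => decide (density f q (B j) ≤ density f q (B i)))

/-- Greedy-RP allocation scheme (GRP-A) run on the active index set `A`: process the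
indices in non-increasing density order and grant an index whenever both the available
resource constraint (ARC) and the reserve price constraint (RPC) hold. -/
def grants {k n : ℕ} (o f : Fin k → ℝ) (s : Fin k → ℕ) (q : ℝ) (B : Fin n → Bid k)
    (A : Finset (Fin n)) : Finset (Fin n) :=
  (sortedBids f q B A).foldl
    (fun W j =>
      if (∀ i, (B j).1 i + ∑ j' ∈ W, (B j').1 i ≤ s i) ∧ ohat o (B j).1 ≤ (B j).2
      then insert j W else W) ∅

/-- `W(B)`: the winners of GRP-A run on all bids. -/
def winners {k n : ℕ} (o f : Fin k → ℝ) (s : Fin k → ℕ) (q : ℝ) (B : Fin n → Bid k) :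
    Finset (Fin n) :=
  grants o f s q B Finset.univ

/-- `W'_j = W(B_{-j}) \ W(B)`: the new winners once bid `j` is removed. -/
def competitorSet {k n : ℕ} (o f : Fin k → ℝ) (s : Fin k → ℕ) (q : ℝ) (B : Fin n → Bid k)
    (j : Fin n) : Finset (Fin n) :=
  grants o f s q B (Finset.univ.erase j) \ winners o f s q B

/-- The competitor density `e_j^comp`: the maximum density over `W'_j`, or `0` if
`W'_j` is empty. -/
def ecomp {k n : ℕ} (o f : Fin k → ℝ) (s : Fin k → ℕ) (q : ℝ) (B : Fin n → Bid k)
    (j : Fin n) : ℝ :=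
  if h : (competitorSet o f s q B j).Nonempty
  then (competitorSet o f s q B j).sup' h (fun i => density f q (B i))
  else 0

/-- The bid-specific reserve density `e_res(b) = ô(d)/(d̂ d)^q`. -/
def eres {k : ℕ} (o f : Fin k → ℝ) (q : ℝ) (b : Bid k) : ℝ := ohat o b.1 / (dhat f b.1) ^ q

/-- Greedy-RP pricing scheme (GRP-P): a winner `j` pays
`p_j = max(e_j^comp, e_res(b_j)) · (d̂ d_j)^q`; a non-winner pays `0`. -/
def payment {k n : ℕ} (o f : Fin k → ℝ) (s : Fin k → ℕ) (q : ℝ) (B : Fin n → Bid k)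
    (j : Fin n) : ℝ :=
  if j ∈ winners o f s q B
  then max (ecomp o f s q B j) (eres o f q (B j)) * (dhat f (B j).1) ^ q
  else 0

-- AUX START
namespace GRPAux

variable {k n : ℕ} (o f : Fin k → ℝ) (s : Fin k → ℕ) (q : ℝ) (B : Fin n → Bid k)

/-- One step of the greedy allocation. -/
def step (W : Finset (Fin n)) (j : Fin n) : Finset (Fin n) :=
  if (∀ i, (B j).1 i + ∑ j' ∈ W, (B j').1 i ≤ s i) ∧ ohat o (B j).1 ≤ (B j).2
  then insert j W else W

lemma grants_eq (A : Finset (Fin n)) :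
    grants o f s q B A = (sortedBids f q B A).foldl (step o s B) ∅ := rfl

lemma mem_step {W : Finset (Fin n)} {a i : Fin n} (h : i ≠ a) :
    i ∈ step o s B W a ↔ i ∈ W := by
  unfold step; split <;> simp [Finset.mem_insert, h]

lemma mem_foldl_of_not_mem {L : List (Fin n)} {X : Finset (Fin n)} {i : Fin n}
    (h : i ∉ L) : i ∈ L.foldl (step o s B) X ↔ i ∈ X := by
  induction L generalizing X with
  | nil => rfl
  | cons a t ih =>
    simp only [List.mem_cons, not_or] at h
    rw [List.foldl_cons, ih h.2, mem_step o s B h.1]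

lemma rpc_of_mem_foldl {L : List (Fin n)} {X : Finset (Fin n)} {i : Fin n}
    (hX : ∀ x ∈ X, ohat o (B x).1 ≤ (B x).2) (h : i ∈ L.foldl (step o s B) X) :
    ohat o (B i).1 ≤ (B i).2 := by
  induction L generalizing X with
  | nil => exact hX i h
  | cons a t ih =>
    refine ih ?_ h
    intro x hx
    unfold step at hx
    split at hx
    next hc =>
      rcases Finset.mem_insert.mp hx with rfl | hx'
      · exact hc.2
      · exact hX x hx'
    next => exact hX x hx

lemma mem_list_of_mem_foldl {L : List (Fin n)} {X : Finset (Fin n)} {i : Fin n}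
    (h : i ∈ L.foldl (step o s B) X) : i ∈ X ∨ i ∈ L := by
  induction L generalizing X with
  | nil => exact Or.inl h
  | cons a t ih =>
    rcases ih h with hx | ht
    · unfold step at hx
      split at hx
      · rcases Finset.mem_insert.mp hx with rfl | hx'
        · exact Or.inr List.mem_cons_self
        · exact Or.inl hx'
      · exact Or.inl hx
    · exact Or.inr (List.mem_cons_of_mem _ ht)

lemma mem_sortedBids {A : Finset (Fin n)} {i : Fin n} :
    i ∈ sortedBids f q B A ↔ i ∈ A := by
  simp [sortedBids, List.mem_mergeSort, Finset.mem_sort]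

lemma nodup_sortedBids (A : Finset (Fin n)) : (sortedBids f q B A).Nodup :=
  ((List.mergeSort_perm _ _).nodup_iff).mpr (Finset.sort_nodup _ _)

lemma trans_le : ∀ a b c : Fin n,
    (fun i j => decide (density f q (B j) ≤ density f q (B i))) a b = true →
    (fun i j => decide (density f q (B j) ≤ density f q (B i))) b c = true →
    (fun i j => decide (density f q (B j) ≤ density f q (B i))) a c = true := by
  intro a b c h1 h2
  simp only [decide_eq_true_eq] at *
  exact le_trans h2 h1

lemma total_le : ∀ a b : Fin n,
    ((fun i j => decide (density f q (B j) ≤ density f q (B i))) a b ||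
     (fun i j => decide (density f q (B j) ≤ density f q (B i))) b a) = true := by
  intro a b
  simpa using le_total (density f q (B b)) (density f q (B a))

lemma pair_sublist_of_sorted {l : List (Fin n)} (hs : l.Pairwise (· ≤ ·))
    {a b : Fin n} (ha : a ∈ l) (hb : b ∈ l) (hab : a < b) : [a, b].Sublist l := by
  induction l with
  | nil => cases ha
  | cons c t ih =>
    have hct := (List.pairwise_cons.mp hs).1
    rcases List.mem_cons.mp ha with rfl | ha'
    · have hb' : b ∈ t := by
        rcases List.mem_cons.mp hb with rfl | h
        · exact absurd hab (lt_irrefl _)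
        · exact h
      exact (List.singleton_sublist.mpr hb').cons₂ _
    · have hb' : b ∈ t := by
        rcases List.mem_cons.mp hb with rfl | h
        · exact absurd (hct a ha') (not_le.mpr hab)
        · exact h
      exact (ih (List.pairwise_cons.mp hs).2 ha' hb').cons _

lemma eq_of_pair_sublists {l : List (Fin n)} (hnd : l.Nodup) {a b : Fin n}
    (h1 : [a, b].Sublist l) (h2 : [b, a].Sublist l) : a = b := by
  induction l with
  | nil => exact absurd h1 (by simp)
  | cons c t ih =>
    have hnd' := (List.nodup_cons.mp hnd)
    rcases List.sublist_cons_iff.mp h1 with h1t | ⟨r1, hr1, hr1t⟩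
    · rcases List.sublist_cons_iff.mp h2 with h2t | ⟨r2, hr2, hr2t⟩
      · exact ih hnd'.2 h1t h2t
      · -- b = c, r2 = [a]
        obtain ⟨rfl, rfl⟩ : b = c ∧ r2 = [a] := by
          constructor <;> injection hr2 with h h' <;> simp_all
        exact absurd (h1t.subset (by simp)) hnd'.1
    · obtain ⟨rfl, rfl⟩ : a = c ∧ r1 = [b] := by
        constructor <;> injection hr1 with h h' <;> simp_all
      rcases List.sublist_cons_iff.mp h2 with h2t | ⟨r2, hr2, hr2t⟩
      · exact absurd (h2t.subset (by simp)) hnd'.1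
      · injection hr2 with h h'
        exact h.symm

lemma pairwise_sortedBids (A : Finset (Fin n)) :
    (sortedBids f q B A).Pairwise (fun a b =>
      density f q (B b) < density f q (B a) ∨
        (density f q (B a) = density f q (B b) ∧ a ≤ b)) := by
  rw [List.pairwise_iff_forall_sublist]
  intro a b hab
  have hsorted := List.pairwise_mergeSort (trans_le f q B) (total_le f q B) (A.sort (· ≤ ·))
  have hle : density f q (B b) ≤ density f q (B a) := by
    have := List.pairwise_iff_forall_sublist.mp hsorted hab
    simpa using this
  rcases lt_or_eq_of_le hle with h | h
  · exact Or.inl h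
  · refine Or.inr ⟨h.symm, ?_⟩
    by_contra hba
    push_neg at hba
    have haA : a ∈ A.sort (· ≤ ·) := by
      have : a ∈ sortedBids f q B A := hab.subset (by simp)
      simpa [sortedBids, List.mem_mergeSort] using this
    have hbA : b ∈ A.sort (· ≤ ·) := by
      have : b ∈ sortedBids f q B A := hab.subset (by simp)
      simpa [sortedBids, List.mem_mergeSort] using this
    have h2 : [b, a].Sublist (A.sort (· ≤ ·)) :=
      pair_sublist_of_sorted (Finset.pairwise_sort _ _) hbA haA hba
    have h3 : [b, a].Sublist (sortedBids f q B A) :=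
      List.sublist_mergeSort (trans_le f q B) (total_le f q B)
        (List.pairwise_pair.mpr (by simp [h])) h2
    exact absurd (eq_of_pair_sublists (nodup_sortedBids f q B A) hab h3).symm
      (ne_of_lt hba)

/-- The key structural lemma: removing a later (lower-density) bid `j` leaves the
sorted list before it unchanged. -/
lemma sortedBids_erase (j : Fin n) :
    sortedBids f q B (Finset.univ.erase j) =
      (sortedBids f q B Finset.univ).erase j := by
  classical
  set R : Fin n → Fin n → Prop := fun a b =>
    density f q (B b) < density f q (B a) ∨
      (density f q (B a) = density f q (B b) ∧ a ≤ b) with hR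
  have hanti : ∀ a b : Fin n, R a b → R b a → a = b := by
    intro a b h1 h2
    rcases h1 with h1 | ⟨he1, h1⟩ <;> rcases h2 with h2 | ⟨he2, h2⟩
    · exact absurd h2 (not_lt.mpr (le_of_lt h1))
    · exact absurd h1 (not_lt.mpr (le_of_eq he2.symm))
    · exact absurd h2 (not_lt.mpr (le_of_eq he1.symm))
    · exact le_antisymm h1 h2
  have hperm : List.Perm (sortedBids f q B (Finset.univ.erase j))
      ((sortedBids f q B Finset.univ).erase j) := by
    apply List.perm_of_nodup_nodup_toFinset_eq
    · exact nodup_sortedBids f q B _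
    · exact (nodup_sortedBids f q B _).erase j
    · ext x
      simp only [List.mem_toFinset, List.Nodup.mem_erase_iff (nodup_sortedBids f q B _),
        mem_sortedBids, Finset.mem_erase, Finset.mem_univ, and_true]
  haveI : IsAntisymm (Fin n) R := ⟨hanti⟩
  exact hperm.eq_of_pairwise' (pairwise_sortedBids f q B _)
    ((pairwise_sortedBids f q B Finset.univ).sublist List.erase_sublist)

/-- Any regranted competitor when `j` is removed has density at most that of `j`. -/
lemma density_le_of_mem_competitorSet {j i : Fin n}
    (hi : i ∈ competitorSet o f s q B j) :
    density f q (B i) ≤ density f q (B j) := by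
  classical
  by_contra hlt
  push_neg at hlt
  obtain ⟨hig, hiw⟩ := Finset.mem_sdiff.mp hi
  have hij : i ≠ j := by
    have := mem_list_of_mem_foldl o s B (by rw [← grants_eq]; exact hig)
    rcases this with h | h
    · exact absurd h (Finset.notMem_empty i)
    · have := (mem_sortedBids f q B).mp h
      exact (Finset.mem_erase.mp this).1
  set L := sortedBids f q B (Finset.univ : Finset (Fin n)) with hL
  have hiL : i ∈ L := (mem_sortedBids f q B).mpr (Finset.mem_univ i)
  have hjL : j ∈ L := (mem_sortedBids f q B).mpr (Finset.mem_univ j)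
  obtain ⟨P, Q, hPQ⟩ := List.append_of_mem hiL
  have hnd : L.Nodup := nodup_sortedBids f q B _
  have hndPQ := hPQ ▸ hnd
  have hiP : i ∉ P := by
    have := (List.nodup_append'.mp (by simpa using hndPQ)).2.2
    intro hiP'
    exact this hiP' List.mem_cons_self
  have hiQ : i ∉ Q := by
    have := List.Nodup.of_append_right hndPQ
    exact (List.nodup_cons.mp this).1
  -- j must be in Q
  have hjQ : j ∈ Q := by
    rcases (by rw [hPQ] at hjL; simpa using hjL : j ∈ P ∨ j = i ∨ j ∈ Q) with hjP | rfl | hjQ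
    · -- then R j i, contradiction with density j < density i
      have hpair := pairwise_sortedBids f q B (Finset.univ : Finset (Fin n))
      rw [← hL, hPQ, List.pairwise_append] at hpair
      have := hpair.2.2 j hjP i List.mem_cons_self
      rcases this with h | ⟨he, _⟩
      · exact absurd hlt (not_lt.mpr (le_of_lt h))
      · exact absurd hlt (not_lt.mpr (le_of_eq he.symm))
    · exact absurd rfl hij.symm
    · exact hjQ
  have hjP : j ∉ P := by
    intro hjP
    have := (List.nodup_append'.mp (by simpa using hndPQ)).2.2
    exact this hjP (List.mem_cons_of_mem _ hjQ)
  -- the erased list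
  have herase : sortedBids f q B (Finset.univ.erase j) = P ++ i :: Q.erase j := by
    rw [sortedBids_erase, ← hL, hPQ, List.erase_append_right _ hjP,
      List.erase_cons_tail (by simpa using hij)]
  -- same decision for i in both runs
  set S := P.foldl (step o s B) (∅ : Finset (Fin n)) with hS
  have hiS : i ∉ S := by
    rw [hS, mem_foldl_of_not_mem o s B hiP]
    exact Finset.notMem_empty i
  have key : ∀ Q' : List (Fin n), i ∉ Q' →
      (i ∈ (P ++ i :: Q').foldl (step o s B) ∅ ↔ i ∈ step o s B S i) := by
    intro Q' hiQ'
    rw [List.foldl_append, List.foldl_cons, ← hS,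
      mem_foldl_of_not_mem o s B hiQ']
  have h1 : i ∈ step o s B S i := by
    rw [← key (Q.erase j) (fun hmem => hiQ (List.mem_of_mem_erase hmem)), ← herase]
    exact hig
  have h2 : i ∈ winners o f s q B := by
    rw [winners, grants_eq, ← hL, hPQ, key Q hiQ]
    exact h1
  exact hiw h2

end GRPAux
-- AUX END

/-- individual rationality and seller protection of the Greedy-RP
mechanism: every winner `j ∈ W(B)` pays a price `p_j` with `ô(d_j) ≤ p_j ≤ v_j`,
and every non-winner pays `p_j = 0`. -/
theorem grp_individually_rational {k n : ℕ} (hk : 1 ≤ k)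
    (f o : Fin k → ℝ) (hf : ∀ i, 0 < f i) (ho : ∀ i, 0 ≤ o i)
    (s : Fin k → ℕ) (q : ℝ) (hq : 0 < q)
    (B : Fin n → Bid k) (hB : ∀ i, validBid (B i)) :
    (∀ j ∈ winners o f s q B,
        ohat o (B j).1 ≤ payment o f s q B j ∧ payment o f s q B j ≤ (B j).2) ∧
    (∀ j ∉ winners o f s q B, payment o f s q B j = 0) := by
  constructor
  · intro j hj
    have hd : 0 < dhat f (B j).1 := by
      obtain ⟨⟨i0, hi0⟩, hv⟩ := hB j
      refine Finset.sum_pos' (fun i _ => ?_) ⟨i0, Finset.mem_univ _, ?_⟩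
      · exact mul_nonneg (Nat.cast_nonneg _) (le_of_lt (hf i))
      · exact mul_pos (by exact_mod_cast hi0) (hf i0)
    have hpow : (0:ℝ) < (dhat f (B j).1) ^ q := Real.rpow_pos_of_pos hd q
    have hrpc : ohat o (B j).1 ≤ (B j).2 :=
      GRPAux.rpc_of_mem_foldl o s B (fun x hx => absurd hx (Finset.notMem_empty x))
        (show j ∈ (sortedBids f q B Finset.univ).foldl (GRPAux.step o s B) ∅ from hj)
    have heres : eres o f q (B j) * (dhat f (B j).1) ^ q = ohat o (B j).1 :=
      div_mul_cancel₀ _ (ne_of_gt hpow)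
    have hdens : density f q (B j) * (dhat f (B j).1) ^ q = (B j).2 :=
      div_mul_cancel₀ _ (ne_of_gt hpow)
    have hcomp : ecomp o f s q B j ≤ density f q (B j) := by
      unfold ecomp
      split
      next h =>
        exact Finset.sup'_le _ _ fun i hi =>
          GRPAux.density_le_of_mem_competitorSet o f s q B hi
      next => exact div_nonneg (hB j).2 (le_of_lt hpow)
    have heres_le : eres o f q (B j) ≤ density f q (B j) :=
      (div_le_div_iff_of_pos_right hpow).mpr hrpc
    have hmax_le : max (ecomp o f s q B j) (eres o f q (B j)) ≤ density f q (B j) :=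
      max_le hcomp heres_le
    unfold payment
    rw [if_pos hj]
    constructor
    · calc ohat o (B j).1 = eres o f q (B j) * (dhat f (B j).1) ^ q := heres.symm
        _ ≤ max (ecomp o f s q B j) (eres o f q (B j)) * (dhat f (B j).1) ^ q :=
          mul_le_mul_of_nonneg_right (le_max_right _ _) (le_of_lt hpow)
    · calc max (ecomp o f s q B j) (eres o f q (B j)) * (dhat f (B j).1) ^ q
          ≤ density f q (B j) * (dhat f (B j).1) ^ q :=
            mul_le_mul_of_nonneg_right hmax_le (le_of_lt hpow)
        _ = (B j).2 := hdens
  · intro j hj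
    unfold payment
    rw [if_neg hj]

end
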